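/- arXiv:1910.05936 — 2 statements merged into one kernel-verified Lean document; each statement's English description precedes it below -/
import Mathlib

section
/- For every non-negative integer n, the dimension over Z/2Z of the vector space RST(n) of rotationally symmetric binary Steinhaus triangles of size n equals ⌊n/3⌋ + δ_{1,(n mod 3)}. -/
open Finset

namespace Steinhaus

/-- Extended binomial coefficient `C(a,b)` for integers `a`, `b`:
`C(a,0) = 1`, `C(0,b) = 0` for `b > 0`, Pascal's rule everywhere; in particular
`C(a,b) = 0` for `b < 0` and `C(a,b) = (-1)^b C(b-a-1,b)` for `a < 0 ≤ b`. -/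
def ibinom (a b : ℤ) : ℤ :=
  if b < 0 then 0
  else if 0 ≤ a then (a.toNat.choose b.toNat : ℤ)
  else (-1) ^ b.toNat * ((b - a - 1).toNat.choose b.toNat : ℤ)

/-- `(i,j)` is an index of the triangle of size `n`, i.e. `1 ≤ i ≤ j ≤ n`. -/
def InTri (n i j : ℕ) : Prop := 1 ≤ i ∧ i ≤ j ∧ j ≤ n

instance (n i j : ℕ) : Decidable (InTri n i j) :=
  inferInstanceAs (Decidable (1 ≤ i ∧ i ≤ j ∧ j ≤ n))

/-- The `ZMod 2`-vector space of binary Steinhaus triangles of size `n`,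
realized as functions `ℕ → ℕ → ZMod 2` vanishing outside the triangle
`{(i,j) | 1 ≤ i ≤ j ≤ n}` and satisfying the local rule
`a i j = a (i-1) (j-1) + a (i-1) j` inside it. -/
def ST (n : ℕ) : Submodule (ZMod 2) (ℕ → ℕ → ZMod 2) where
  carrier := {a | (∀ i j, ¬ InTri n i j → a i j = 0) ∧
    ∀ i j, 2 ≤ i → i ≤ j → j ≤ n → a i j = a (i - 1) (j - 1) + a (i - 1) j}
  add_mem' := by
    rintro a b ⟨ha0, ha1⟩ ⟨hb0, hb1⟩
    refine ⟨fun i j h => ?_, fun i j h2 hij hjn => ?_⟩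
    · simp only [Pi.add_apply, ha0 i j h, hb0 i j h, add_zero]
    · simp only [Pi.add_apply, ha1 i j h2 hij hjn, hb1 i j h2 hij hjn]
      ring
  zero_mem' := ⟨fun _ _ _ => rfl, fun _ _ _ _ _ => by simp⟩
  smul_mem' := by
    rintro c a ⟨ha0, ha1⟩
    refine ⟨fun i j h => ?_, fun i j h2 hij hjn => ?_⟩
    · simp only [Pi.smul_apply, ha0 i j h, smul_zero]
    · simp only [Pi.smul_apply, ha1 i j h2 hij hjn, smul_add]

/-- The first row of the triangle `a` (of size `n`) is the sequence `S`;
equivalently, `a = ∇S`. -/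
def FirstRow (n : ℕ) (a : ℕ → ℕ → ZMod 2) (S : ℕ → ZMod 2) : Prop :=
  ∀ j, 1 ≤ j → j ≤ n → a 1 j = S j

/-- The rotation `r` by 120 degrees: `r(a)_{i,j} = a_{j-i+1, n-i+1}`. -/
def rot (n : ℕ) (a : ℕ → ℕ → ZMod 2) : ℕ → ℕ → ZMod 2 :=
  fun i j => if InTri n i j then a (j - i + 1) (n - i + 1) else 0

/-- The horizontal reflection `h`: `h(a)_{i,j} = a_{i, n-j+i}`. -/
def hrefl (n : ℕ) (a : ℕ → ℕ → ZMod 2) : ℕ → ℕ → ZMod 2 :=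
  fun i j => if InTri n i j then a i (n - j + i) else 0

lemma rot_add (n : ℕ) (a b : ℕ → ℕ → ZMod 2) :
    rot n (a + b) = rot n a + rot n b := by
  funext i j
  simp only [rot, Pi.add_apply]
  split_ifs <;> simp

lemma rot_smul (n : ℕ) (c : ZMod 2) (a : ℕ → ℕ → ZMod 2) :
    rot n (c • a) = c • rot n a := by
  funext i j
  simp only [rot, Pi.smul_apply]
  split_ifs <;> simp

lemma hrefl_add (n : ℕ) (a b : ℕ → ℕ → ZMod 2) :
    hrefl n (a + b) = hrefl n a + hrefl n b := by
  funext i j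
  simp only [hrefl, Pi.add_apply]
  split_ifs <;> simp

lemma hrefl_smul (n : ℕ) (c : ZMod 2) (a : ℕ → ℕ → ZMod 2) :
    hrefl n (c • a) = c • hrefl n a := by
  funext i j
  simp only [hrefl, Pi.smul_apply]
  split_ifs <;> simp

/-- The linear map `ρ = r² + r + id`. -/
def rho (n : ℕ) (a : ℕ → ℕ → ZMod 2) : ℕ → ℕ → ZMod 2 :=
  rot n (rot n a) + rot n a + a

/-- The subspace of rotationally symmetric Steinhaus triangles (fixed by `r`). -/
def RST (n : ℕ) : Submodule (ZMod 2) (ℕ → ℕ → ZMod 2) where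
  carrier := {a | a ∈ ST n ∧ rot n a = a}
  add_mem' := by
    rintro a b ⟨ha, ha'⟩ ⟨hb, hb'⟩
    exact ⟨add_mem ha hb, by rw [rot_add, ha', hb']⟩
  zero_mem' := ⟨zero_mem _, by funext i j; simp [rot]⟩
  smul_mem' := by
    rintro c a ⟨ha, ha'⟩
    exact ⟨Submodule.smul_mem _ c ha, by rw [rot_smul, ha']⟩

/-- The subspace of horizontally symmetric Steinhaus triangles (fixed by `h`). -/
def HST (n : ℕ) : Submodule (ZMod 2) (ℕ → ℕ → ZMod 2) where
  carrier := {a | a ∈ ST n ∧ hrefl n a = a}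
  add_mem' := by
    rintro a b ⟨ha, ha'⟩ ⟨hb, hb'⟩
    exact ⟨add_mem ha hb, by rw [hrefl_add, ha', hb']⟩
  zero_mem' := ⟨zero_mem _, by funext i j; simp [hrefl]⟩
  smul_mem' := by
    rintro c a ⟨ha, ha'⟩
    exact ⟨Submodule.smul_mem _ c ha, by rw [hrefl_smul, ha']⟩

/-- The subspace of dihedrally symmetric Steinhaus triangles (fixed by `r` and `h`). -/
def DST (n : ℕ) : Submodule (ZMod 2) (ℕ → ℕ → ZMod 2) where
  carrier := {a | a ∈ ST n ∧ rot n a = a ∧ hrefl n a = a}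
  add_mem' := by
    rintro a b ⟨ha, ha', ha''⟩ ⟨hb, hb', hb''⟩
    exact ⟨add_mem ha hb, by rw [rot_add, ha', hb'], by rw [hrefl_add, ha'', hb'']⟩
  zero_mem' := ⟨zero_mem _, by funext i j; simp [rot], by funext i j; simp [hrefl]⟩
  smul_mem' := by
    rintro c a ⟨ha, ha', ha''⟩
    exact ⟨Submodule.smul_mem _ c ha, by rw [rot_smul, ha'],
      by rw [hrefl_smul, ha'']⟩

/-- `σ₂`: the sum of the first `n` terms of a sequence over `ZMod 2`. -/
def seqSum (n : ℕ) (S : ℕ → ZMod 2) : ZMod 2 := ∑ j ∈ Finset.Icc 1 n, S j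

/-- The subspace `DST₀(n)` of dihedrally symmetric Steinhaus triangles whose
first row has zero sum. -/
def DST0 (n : ℕ) : Submodule (ZMod 2) (ℕ → ℕ → ZMod 2) where
  carrier := {a | a ∈ DST n ∧ seqSum n (a 1) = 0}
  add_mem' := by
    rintro a b ⟨ha, ha'⟩ ⟨hb, hb'⟩
    refine ⟨add_mem ha hb, ?_⟩
    have h : seqSum n ((a + b) 1) = seqSum n (a 1) + seqSum n (b 1) := by
      simp [seqSum, Finset.sum_add_distrib]
    rw [h, ha', hb', add_zero]
  zero_mem' := ⟨zero_mem _, by simp [seqSum]⟩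
  smul_mem' := by
    rintro c a ⟨ha, ha'⟩
    refine ⟨Submodule.smul_mem _ c ha, ?_⟩
    have h : seqSum n ((c • a) 1) = c • seqSum n (a 1) := by
      simp [seqSum, smul_eq_mul, Finset.mul_sum]
    rw [h, ha', smul_zero]

/-- The derived sequence `∂S`. -/
def der (S : ℕ → ZMod 2) : ℕ → ZMod 2 := fun j => S j + S (j + 1)

/-- The antiderived sequence `∫_{i,x} S`, whose `j`-th term is
`x + Σ_{k=1}^{i-1} S k + Σ_{k=1}^{j-1} S k`. -/
def antider (i : ℕ) (x : ZMod 2) (S : ℕ → ZMod 2) : ℕ → ZMod 2 :=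
  fun j => x + (∑ k ∈ Finset.Ico 1 i, S k) + (∑ k ∈ Finset.Ico 1 j, S k)

/-- A sequence of length `n` is symmetric. -/
def SymmSeq (n : ℕ) (S : ℕ → ZMod 2) : Prop :=
  ∀ j, 1 ≤ j → j ≤ n → S (n - j + 1) = S j

/-- The binomial sequence `bs(k,l)` whose `j`-th term is `C(l+j-1, k) mod 2`. -/
def bseq (k l : ℤ) : ℕ → ZMod 2 := fun j => ((ibinom (l + (j : ℤ) - 1) k : ℤ) : ZMod 2)

/-- The map `H : ST(n) → ST(n-3)` removing the first row and the two sides. -/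
def Hmap (n : ℕ) (a : ℕ → ℕ → ZMod 2) : ℕ → ℕ → ZMod 2 :=
  fun i j => if InTri (n - 3) i j then a (1 + i) (2 + j) else 0

/-- The projection `π_G` of a subspace `V` of triangles onto coordinates in `G`. -/
def proj (V : Submodule (ZMod 2) (ℕ → ℕ → ZMod 2)) (G : Set (ℕ × ℕ)) :
    V →ₗ[ZMod 2] (G → ZMod 2) where
  toFun a := fun p => (a : ℕ → ℕ → ZMod 2) p.1.1 p.1.2
  map_add' := fun _ _ => rfl
  map_smul' := fun _ _ => rfl

/-- `G` is a generating index set of the subspace `V` of `ST(n)`: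
`G` consists of triangle indices and `π_G : V → (ZMod 2)^G` is an isomorphism. -/
def IsGenIndexSet (n : ℕ) (V : Submodule (ZMod 2) (ℕ → ℕ → ZMod 2))
    (G : Set (ℕ × ℕ)) : Prop :=
  (∀ p ∈ G, InTri n p.1 p.2) ∧ Function.Bijective (proj V G)

end Steinhaus
namespace Steinhaus

/-! ### Auxiliary material for statement6 -/

private lemma z2a : ∀ x y : ZMod 2, x + y = 0 → y = x := by decide

private lemma z2b : ∀ x y : ZMod 2, y = x + y → x = 0 := by decide

private lemma z2c : ∀ x y : ZMod 2, x + (x + y) = y := by decide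

private lemma z2d : ∀ x : ZMod 2, x + x = 0 := by decide

lemma mem_ST_iff {n : ℕ} {a : ℕ → ℕ → ZMod 2} : a ∈ ST n ↔
    ((∀ i j, ¬ InTri n i j → a i j = 0) ∧
      ∀ i j, 2 ≤ i → i ≤ j → j ≤ n → a i j = a (i - 1) (j - 1) + a (i - 1) j) :=
  Iff.rfl

lemma mem_RST_iff {n : ℕ} {a : ℕ → ℕ → ZMod 2} : a ∈ RST n ↔ a ∈ ST n ∧ rot n a = a :=
  Iff.rfl

lemma rot_fix_apply {n : ℕ} {a : ℕ → ℕ → ZMod 2} (h : rot n a = a)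
    {i j : ℕ} (hij : InTri n i j) : a i j = a (j - i + 1) (n - i + 1) := by
  conv_lhs => rw [← h]
  simp [rot, hij]

/-- The boundary-minus-corners triangle, spanning the kernel of `Hmap` on `RST n`. -/
def etri (n : ℕ) : ℕ → ℕ → ZMod 2 := fun i j =>
  if (1 ≤ i ∧ i ≤ j ∧ j ≤ n) ∧
      ((i = 1 ∧ 2 ≤ j ∧ j ≤ n - 1) ∨ (2 ≤ i ∧ i ≤ n - 1 ∧ (j = i ∨ j = n))) then 1 else 0

lemma etri_mem {n : ℕ} (hn : 3 ≤ n) : etri n ∈ RST n := by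
  refine ⟨⟨fun i j h => ?_, fun i j h2 hij hjn => ?_⟩, ?_⟩
  · simp only [InTri] at h
    simp only [etri]
    rw [if_neg (by tauto)]
  · simp only [etri]
    split_ifs <;> first | rfl | decide | (exfalso; omega)
  · funext i j
    by_cases hij : InTri n i j
    · obtain ⟨h1, h2, h3⟩ := hij
      simp only [rot, etri]
      rw [if_pos (show InTri n i j from ⟨h1, h2, h3⟩)]
      split_ifs <;> first | rfl | (exfalso; omega)
    · simp only [rot, etri] at *
      rw [if_neg hij, if_neg (by simp only [InTri] at hij; tauto)]

lemma etri_ne_zero {n : ℕ} (hn : 3 ≤ n) : etri n ≠ 0 := by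
  intro h
  have h2 : etri n 1 2 = 0 := by rw [h]; rfl
  rw [etri, if_pos (by omega)] at h2
  exact one_ne_zero h2

lemma Hmap_add (n : ℕ) (a b : ℕ → ℕ → ZMod 2) :
    Hmap n (a + b) = Hmap n a + Hmap n b := by
  funext i j
  simp only [Hmap, Pi.add_apply]
  split_ifs <;> simp

lemma Hmap_smul (n : ℕ) (c : ZMod 2) (a : ℕ → ℕ → ZMod 2) :
    Hmap n (c • a) = c • Hmap n a := by
  funext i j
  simp only [Hmap, Pi.smul_apply]
  split_ifs <;> simp

lemma Hmap_mem_ST {n : ℕ} {a : ℕ → ℕ → ZMod 2} (ha : a ∈ ST n) :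
    Hmap n a ∈ ST (n - 3) := by
  obtain ⟨ha0, ha1⟩ := ha
  refine ⟨fun i j h => ?_, fun i j h2 hij hjn => ?_⟩
  · simp only [Hmap]
    rw [if_neg h]
  · simp only [Hmap]
    rw [if_pos (by unfold InTri; omega), if_pos (by unfold InTri; omega), if_pos (by unfold InTri; omega)]
    have := ha1 (1 + i) (2 + j) (by omega) (by omega) (by omega)
    rw [show 1 + i - 1 = 1 + (i-1) from by omega, show 2 + j - 1 = 2 + (j-1) from by omega] at this
    exact this

lemma Hmap_rot {n : ℕ} {a : ℕ → ℕ → ZMod 2} (hn : 3 ≤ n) (hr : rot n a = a) :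
    rot (n - 3) (Hmap n a) = Hmap n a := by
  funext i j
  by_cases hij : InTri (n - 3) i j
  · obtain ⟨h1, h2, h3⟩ := hij
    simp only [rot, Hmap]
    rw [if_pos (by unfold InTri; omega), if_pos (by unfold InTri; omega), if_pos (by unfold InTri; omega)]
    have := rot_fix_apply hr (show InTri n (1 + i) (2 + j) from by constructor <;> omega)
    rw [this]
    congr 1 <;> omega
  · simp only [rot, Hmap]
    rw [if_neg hij, if_neg hij]

lemma Hmap_etri {n : ℕ} (hn : 3 ≤ n) : Hmap n (etri n) = 0 := by
  funext i j
  simp only [Hmap, Pi.zero_apply]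
  by_cases hij : InTri (n - 3) i j
  · obtain ⟨h1, h2, h3⟩ := hij
    rw [if_pos ⟨h1, h2, h3⟩, etri, if_neg (by omega)]
  · rw [if_neg hij]

lemma ker_char {n : ℕ} (hn : 3 ≤ n) {a : ℕ → ℕ → ZMod 2} (ha : a ∈ RST n)
    (hz : ∀ i j, 2 ≤ i → i + 1 ≤ j → j ≤ n - 1 → a i j = 0) :
    a = a 1 2 • etri n := by
  obtain ⟨⟨ha0, ha1⟩, har⟩ := ha
  have row : ∀ j, 2 ≤ j → j ≤ n - 1 → a 1 j = a 1 2 := by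
    intro j
    induction j with
    | zero => omega
    | succ k ih =>
      intro h2 h3
      rcases Nat.eq_or_lt_of_le h2 with h | h
      · rw [← h]
      · have hk2 : 2 ≤ k := by omega
        have hz2 : a 2 (k + 1) = 0 := hz 2 (k + 1) le_rfl (by omega) h3
        have hrule := ha1 2 (k + 1) le_rfl (by omega) (by omega)
        simp only [show (2:ℕ) - 1 = 1 from rfl, Nat.add_sub_cancel] at hrule
        rw [hz2] at hrule
        rw [z2a _ _ hrule.symm]
        exact ih hk2 (by omega)
  have h11 : a 1 1 = 0 := by
    have hd := rot_fix_apply har (show InTri n 2 2 from by constructor <;> omega)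
    rw [show 2 - 2 + 1 = 1 from rfl] at hd
    have hrule := ha1 2 2 le_rfl le_rfl (by omega)
    simp only [show (2:ℕ) - 1 = 1 from rfl] at hrule
    rw [hd, row (n - 2 + 1) (by omega) (by omega)] at hrule
    exact z2b _ _ hrule
  have h1n : a 1 n = 0 := by
    have hd := rot_fix_apply har (show InTri n 1 1 from by constructor <;> omega)
    rw [show 1 - 1 + 1 = 1 from rfl, show n - 1 + 1 = n from by omega] at hd
    rw [← hd, h11]
  have diag : ∀ i, 1 ≤ i → i ≤ n → a i i = a 1 (n - i + 1) := by
    intro i hi1 hi2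
    have hd := rot_fix_apply har (show InTri n i i from by constructor <;> omega)
    rw [show i - i + 1 = 1 from by omega] at hd
    exact hd
  have col : ∀ i, 1 ≤ i → i ≤ n → a i n = a 1 i := by
    intro i hi1 hi2
    have hd := rot_fix_apply har (show InTri n i n from by constructor <;> omega)
    rw [hd, diag (n - i + 1) (by omega) (by omega),
      show n - (n - i + 1) + 1 = i from by omega]
  funext i j
  simp only [Pi.smul_apply, smul_eq_mul]
  by_cases hij : InTri n i j
  · obtain ⟨hi, hij', hjn⟩ := hij
    by_cases h1 : i = 1
    · subst h1
      by_cases hj1 : j = 1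
      · subst hj1
        rw [h11, etri, if_neg (by omega), mul_zero]
      · by_cases hjn' : j = n
        · subst hjn'
          rw [h1n, etri, if_neg (by omega), mul_zero]
        · rw [row j (by omega) (by omega), etri, if_pos (by omega), mul_one]
    · by_cases hji : j = i
      · subst hji
        rcases Nat.eq_or_lt_of_le hjn with h | h
        · rw [diag j (by omega) (by omega), h, show n - n + 1 = 1 from by omega, h11,
            etri, if_neg (by omega), mul_zero]
        · rw [diag j (by omega) (by omega), row (n - j + 1) (by omega) (by omega),
            etri, if_pos (by omega), mul_one]
      · by_cases hjn2 : j = n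
        · subst hjn2
          rw [col i (by omega) (by omega), row i (by omega) (by omega),
            etri, if_pos (by omega), mul_one]
        · rw [hz i j (by omega) (by omega) (by omega), etri, if_neg (by omega), mul_zero]
  · simp only [InTri] at hij
    rw [ha0 i j (by simp only [InTri]; tauto), etri, if_neg (by tauto), mul_zero]

/-- First row of the wrapped triangle extending `b` (of size `n-3`) to size `n`. -/
def Useq (n : ℕ) (b : ℕ → ℕ → ZMod 2) : ℕ → ZMod 2 := fun j =>
  if j = 1 ∨ j = n then ∑ k ∈ Finset.Ico 1 (n - 2), b 1 k
  else ∑ k ∈ Finset.Ico 1 (j - 1), b 1 k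

lemma Useq_one (n : ℕ) (b : ℕ → ℕ → ZMod 2) :
    Useq n b 1 = ∑ k ∈ Finset.Ico 1 (n - 2), b 1 k := if_pos (Or.inl rfl)

lemma Useq_n (n : ℕ) (b : ℕ → ℕ → ZMod 2) :
    Useq n b n = ∑ k ∈ Finset.Ico 1 (n - 2), b 1 k := if_pos (Or.inr rfl)

lemma Useq_mid {n j : ℕ} (b : ℕ → ℕ → ZMod 2) (h1 : 2 ≤ j) (h2 : j ≤ n - 1) :
    Useq n b j = ∑ k ∈ Finset.Ico 1 (j - 1), b 1 k := if_neg (by omega)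

lemma Useq_two {n : ℕ} (b : ℕ → ℕ → ZMod 2) (hn : 3 ≤ n) : Useq n b 2 = 0 := by
  rw [Useq_mid b le_rfl (by omega)]
  simp

lemma Useq_pred {n : ℕ} (b : ℕ → ℕ → ZMod 2) (hn : 3 ≤ n) :
    Useq n b (n - 1) = ∑ k ∈ Finset.Ico 1 (n - 2), b 1 k := by
  rw [Useq_mid b (by omega) (by omega), show n - 1 - 1 = n - 2 from by omega]

lemma Useq_step {n j : ℕ} (b : ℕ → ℕ → ZMod 2) (h1 : 2 ≤ j) (h2 : j ≤ n - 2) :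
    Useq n b (j + 1) = Useq n b j + b 1 (j - 1) := by
  rw [Useq_mid b (by omega) (by omega), Useq_mid b h1 (by omega),
    show j + 1 - 1 = (j - 1) + 1 from by omega,
    Finset.sum_Ico_succ_top (by omega : 1 ≤ j - 1)]

/-- The wrapped triangle: rotationally symmetric size-`n` extension of `b`. -/
def wrap (n : ℕ) (b : ℕ → ℕ → ZMod 2) : ℕ → ℕ → ZMod 2 := fun i j =>
  if 1 ≤ i ∧ i ≤ j ∧ j ≤ n then
    if i = 1 then Useq n b j
    else if j = i then Useq n b (n - i + 1)
    else if j = n then Useq n b i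
    else b (i - 1) (j - 2)
  else 0

lemma wrap_out {n i j : ℕ} (b : ℕ → ℕ → ZMod 2) (h : ¬ InTri n i j) : wrap n b i j = 0 := by
  simp only [InTri] at h
  rw [wrap, if_neg h]

lemma wrap_row {n j : ℕ} (b : ℕ → ℕ → ZMod 2) (h1 : 1 ≤ j) (h2 : j ≤ n) :
    wrap n b 1 j = Useq n b j := by
  rw [wrap, if_pos (by omega), if_pos rfl]

lemma wrap_diag {n i : ℕ} (b : ℕ → ℕ → ZMod 2) (h1 : 2 ≤ i) (h2 : i ≤ n) :
    wrap n b i i = Useq n b (n - i + 1) := by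
  rw [wrap, if_pos (by omega), if_neg (by omega), if_pos rfl]

lemma wrap_col {n i : ℕ} (b : ℕ → ℕ → ZMod 2) (h1 : 2 ≤ i) (h2 : i ≤ n - 1) (hn : 3 ≤ n) :
    wrap n b i n = Useq n b i := by
  rw [wrap, if_pos (by omega), if_neg (by omega), if_neg (by omega), if_pos rfl]

lemma wrap_int {n i j : ℕ} (b : ℕ → ℕ → ZMod 2) (h1 : 2 ≤ i) (h2 : i + 1 ≤ j)
    (h3 : j ≤ n - 1) : wrap n b i j = b (i - 1) (j - 2) := by
  rw [wrap, if_pos (by omega), if_neg (by omega), if_neg (by omega), if_neg (by omega)]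

lemma sum_Ico_one_two (b : ℕ → ℕ → ZMod 2) : ∑ k ∈ Finset.Ico 1 2, b 1 k = b 1 1 := by
  have h : (Finset.Ico 1 2 : Finset ℕ) = {1} := rfl
  rw [h, Finset.sum_singleton]

lemma wrap_mem_ST {n : ℕ} (hn : 3 ≤ n) {b : ℕ → ℕ → ZMod 2} (hb : b ∈ RST (n - 3)) :
    wrap n b ∈ ST n := by
  obtain ⟨⟨hb0, hb1⟩, hbr⟩ := hb
  refine ⟨fun i j h => wrap_out b h, fun i j h2 hij hjn => ?_⟩
  by_cases hd : j = i
  · subst hd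
    by_cases hi2 : j = 2
    · subst hi2
      rw [wrap_diag b le_rfl hjn, show (2:ℕ) - 1 = 1 from rfl,
        wrap_row b le_rfl (by omega), wrap_row b (by omega) (by omega),
        show n - 2 + 1 = n - 1 from by omega, Useq_pred b hn, Useq_one, Useq_two b hn,
        add_zero]
    · by_cases hin : j = n
      · rw [hin, wrap_diag b (by omega) le_rfl, wrap_diag b (by omega) (by omega),
          wrap_col b (by omega) (by omega) hn,
          show n - n + 1 = 1 from by omega, show n - (n - 1) + 1 = 2 from by omega,
          Useq_one, Useq_two b hn, Useq_pred b hn, zero_add]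
      · -- 3 ≤ j ≤ n - 1
        have h3 : 3 ≤ j := by omega
        rw [wrap_diag b h2 hjn, wrap_diag b (by omega) (by omega),
          wrap_int b (by omega) (by omega) (by omega),
          show n - (j - 1) + 1 = (n - j + 1) + 1 from by omega]
        have hbd : b (j - 1 - 1) (j - 2) = b 1 (n - j) := by
          have := rot_fix_apply hbr (show InTri (n - 3) (j - 2) (j - 2) from by
            constructor <;> omega)
          rw [show j - 2 - (j - 2) + 1 = 1 from by omega,
            show n - 3 - (j - 2) + 1 = n - j from by omega] at this
          rw [show j - 1 - 1 = j - 2 from by omega, this]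
        rw [hbd]
        by_cases hlast : j = n - 1
        · have h4 : 4 ≤ n := by omega
          rw [show n - j + 1 = 2 from by omega, show n - j = 1 from by omega,
            Useq_two b hn, show (2:ℕ) + 1 = 3 from rfl,
            Useq_mid b (by omega) (by omega), show (3:ℕ) - 1 = 2 from rfl,
            sum_Ico_one_two, z2d]
        · have hs := Useq_step (n := n) (j := n - j + 1) b (by omega) (by omega)
          rw [show n - j + 1 - 1 = n - j from by omega] at hs
          rw [hs, add_assoc, z2d, add_zero]
  · -- j ≠ i, so i < j
    by_cases hjn' : j = n
    · by_cases hi2 : i = 2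
      · rw [hjn', hi2, wrap_col b le_rfl (by omega) hn, show (2:ℕ) - 1 = 1 from rfl,
          wrap_row b (by omega) (by omega), wrap_row b (by omega) (by omega),
          Useq_two b hn, Useq_pred b hn, Useq_n, z2d]
      · have h3 : 3 ≤ i := by omega
        rw [hjn', wrap_col b h2 (by omega) hn, wrap_col b (by omega) (by omega) hn,
          wrap_int b (by omega) (by omega) (by omega)]
        have hbc : b (i - 1 - 1) (n - 1 - 2) = b 1 (i - 2) := by
          have := rot_fix_apply hbr (show InTri (n - 3) 1 (i - 2) from by
            constructor <;> omega)
          rw [show i - 2 - 1 + 1 = i - 2 from by omega,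
            show n - 3 - 1 + 1 = n - 3 from by omega] at this
          rw [show i - 1 - 1 = i - 2 from by omega, show n - 1 - 2 = n - 3 from by omega,
            ← this]
        rw [hbc]
        have hs := Useq_step (n := n) (j := i - 1) b (by omega) (by omega)
        rw [show i - 1 + 1 = i from by omega, show i - 1 - 1 = i - 2 from by omega] at hs
        rw [hs, add_comm]
    · -- interior: i < j < n
      by_cases hi2 : i = 2
      · rw [hi2, wrap_int b le_rfl (by omega) (by omega), show (2:ℕ) - 1 = 1 from rfl,
          wrap_row b (by omega) (by omega), wrap_row b (by omega) (by omega)]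
        have hs := Useq_step (n := n) (j := j - 1) b (by omega) (by omega)
        rw [show j - 1 + 1 = j from by omega, show j - 1 - 1 = j - 2 from by omega] at hs
        rw [hs, z2c]
      · have h3 : 3 ≤ i := by omega
        rw [wrap_int b h2 (by omega) (by omega),
          wrap_int b (by omega) (by omega) (by omega),
          wrap_int b (by omega) (by omega) (by omega)]
        have := hb1 (i - 1) (j - 2) (by omega) (by omega) (by omega)
        rw [show i - 1 - 1 = i - 2 from by omega, show j - 2 - 1 = j - 3 from by omega] at this
        rw [this, show j - 1 - 2 = j - 3 from by omega,
          show i - 1 - 1 = i - 2 from by omega]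

lemma wrap_rot {n : ℕ} (hn : 3 ≤ n) {b : ℕ → ℕ → ZMod 2} (hb : b ∈ RST (n - 3)) :
    rot n (wrap n b) = wrap n b := by
  obtain ⟨⟨hb0, hb1⟩, hbr⟩ := hb
  funext i j
  by_cases hij : InTri n i j
  · obtain ⟨h1, h2, h3⟩ := hij
    rw [rot, if_pos ⟨h1, h2, h3⟩]
    by_cases hi1 : i = 1
    · subst hi1
      rw [show j - 1 + 1 = j from by omega, show n - 1 + 1 = n from by omega]
      by_cases hj1 : j = 1
      · rw [hj1, wrap_row b (by omega) (by omega), wrap_row b (by omega) (by omega),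
          Useq_one, Useq_n]
      · by_cases hjn : j = n
        · rw [hjn, wrap_diag b (by omega) le_rfl, wrap_row b (by omega) le_rfl,
            show n - n + 1 = 1 from by omega, Useq_one, Useq_n]
        · rw [wrap_col b (by omega) (by omega) hn, wrap_row b (by omega) (by omega)]
    · by_cases hji : j = i
      · rw [hji, show i - i + 1 = 1 from by omega, wrap_row b (by omega) (by omega),
          wrap_diag b (by omega) (by omega)]
      · by_cases hjn : j = n
        · rw [hjn, show n - i + 1 = n - i + 1 from rfl,
            wrap_diag b (by omega) (by omega), wrap_col b (by omega) (by omega) hn,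
            show n - (n - i + 1) + 1 = i from by omega]
        · rw [wrap_int b (by omega) (by omega) (by omega),
            wrap_int b (by omega) (by omega) (by omega)]
          have := rot_fix_apply hbr (show InTri (n - 3) (i - 1) (j - 2) from by
            constructor <;> omega)
          rw [show j - 2 - (i - 1) + 1 = j - i + 1 - 1 from by omega,
            show n - 3 - (i - 1) + 1 = n - i + 1 - 2 from by omega] at this
          exact this.symm
  · rw [rot, if_neg hij, wrap_out b hij]

lemma wrap_Hmap {n : ℕ} (hn : 3 ≤ n) {b : ℕ → ℕ → ZMod 2} (hb : b ∈ RST (n - 3)) :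
    Hmap n (wrap n b) = b := by
  funext i j
  by_cases hij : InTri (n - 3) i j
  · obtain ⟨h1, h2, h3⟩ := hij
    rw [Hmap, if_pos ⟨h1, h2, h3⟩, wrap_int b (by omega) (by omega) (by omega),
      show 1 + i - 1 = i from by omega, show 2 + j - 2 = j from by omega]
  · rw [Hmap, if_neg hij, hb.1.1 i j hij]

instance RST_finiteDimensional (n : ℕ) : FiniteDimensional (ZMod 2) (RST n) := by
  let f : (RST n) →ₗ[ZMod 2] (Fin (n + 1) → Fin (n + 1) → ZMod 2) :=
    { toFun := fun a => fun i j => (a : ℕ → ℕ → ZMod 2) i j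
      map_add' := fun a b => rfl
      map_smul' := fun c a => rfl }
  apply FiniteDimensional.of_injective f
  intro a b h
  apply Subtype.ext
  funext i j
  by_cases hij : InTri n i j
  · obtain ⟨h1, h2, h3⟩ := hij
    have := congrFun (congrFun h ⟨i, by omega⟩) ⟨j, by omega⟩
    exact this
  · rw [a.2.1.1 i j hij, b.2.1.1 i j hij]

/-- The map `H : RST(n) → RST(n-3)`. -/
def phi (n : ℕ) (hn : 3 ≤ n) : (RST n) →ₗ[ZMod 2] (RST (n - 3)) where
  toFun a := ⟨Hmap n ↑a, ⟨Hmap_mem_ST a.2.1, Hmap_rot hn a.2.2⟩⟩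
  map_add' a b := Subtype.ext (by
    simp only [Submodule.coe_add]
    exact Hmap_add n ↑a ↑b)
  map_smul' c a := Subtype.ext (by
    simp only [SetLike.val_smul, RingHom.id_apply]
    exact Hmap_smul n c ↑a)

lemma phi_surjective {n : ℕ} (hn : 3 ≤ n) : Function.Surjective (phi n hn) := by
  intro b
  refine ⟨⟨wrap n ↑b, ⟨wrap_mem_ST hn b.2, wrap_rot hn b.2⟩⟩, ?_⟩
  exact Subtype.ext (wrap_Hmap hn b.2)

lemma phi_ker {n : ℕ} (hn : 3 ≤ n) :
    LinearMap.ker (phi n hn) =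
      Submodule.span (ZMod 2) {(⟨etri n, etri_mem hn⟩ : RST n)} := by
  apply le_antisymm
  · intro a ha
    rw [LinearMap.mem_ker] at ha
    have ha' : Hmap n (a : ℕ → ℕ → ZMod 2) = 0 := congrArg Subtype.val ha
    have hz : ∀ i j, 2 ≤ i → i + 1 ≤ j → j ≤ n - 1 → (a : ℕ → ℕ → ZMod 2) i j = 0 := by
      intro i j h2 h3 h4
      have := congrFun (congrFun ha' (i - 1)) (j - 2)
      rw [Hmap, if_pos (show InTri (n - 3) (i - 1) (j - 2) from by constructor <;> omega),
        show 1 + (i - 1) = i from by omega, show 2 + (j - 2) = j from by omega] at this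
      exact this
    have key : (a : ℕ → ℕ → ZMod 2) = (a : ℕ → ℕ → ZMod 2) 1 2 • etri n :=
      ker_char hn a.2 hz
    have : a = ((a : ℕ → ℕ → ZMod 2) 1 2) • (⟨etri n, etri_mem hn⟩ : RST n) :=
      Subtype.ext key
    rw [this]
    exact Submodule.smul_mem _ _ (Submodule.mem_span_singleton_self _)
  · rw [Submodule.span_le, Set.singleton_subset_iff, SetLike.mem_coe, LinearMap.mem_ker]
    exact Subtype.ext (Hmap_etri hn)

lemma dim_step {n : ℕ} (hn : 3 ≤ n) :
    Module.finrank (ZMod 2) (RST n) = Module.finrank (ZMod 2) (RST (n - 3)) + 1 := by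
  have h := LinearMap.finrank_range_add_finrank_ker (phi n hn)
  rw [LinearMap.range_eq_top.mpr (phi_surjective hn), finrank_top, phi_ker hn,
    finrank_span_singleton (by
      intro hc
      exact etri_ne_zero hn (congrArg Subtype.val hc))] at h
  omega

lemma RST_zero_eq_bot : RST 0 = ⊥ := by
  rw [eq_bot_iff]
  intro a ha
  have : a = 0 := by
    funext i j
    exact ha.1.1 i j (by simp only [InTri]; omega)
  simp [this]

lemma RST_two_eq_bot : RST 2 = ⊥ := by
  rw [eq_bot_iff]
  intro a ha
  obtain ⟨⟨ha0, ha1⟩, har⟩ := ha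
  have e1 : a 1 1 = a 1 2 := by
    have := rot_fix_apply har (show InTri 2 1 1 from by constructor <;> omega)
    simpa using this
  have e2 : a 1 2 = a 2 2 := by
    have := rot_fix_apply har (show InTri 2 1 2 from by constructor <;> omega)
    simpa using this
  have e3 : a 2 2 = a 1 1 + a 1 2 := by
    have := ha1 2 2 le_rfl le_rfl le_rfl
    simpa using this
  have hz : a 2 2 = 0 := by
    rw [e3, ← e1]
    exact z2d _
  have h12 : a 1 2 = 0 := by rw [e2, hz]
  have h11 : a 1 1 = 0 := by rw [e1, h12]
  show a = 0
  funext i j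
  by_cases hij : InTri 2 i j
  · obtain ⟨hi, hj, hjn⟩ := hij
    have hi2 : i ≤ 2 := le_trans hj hjn
    interval_cases i <;> interval_cases j <;>
      simp only [Pi.zero_apply] <;> assumption
  · simp [ha0 i j hij]

/-- The generator of `RST 1`. -/
def uone : ℕ → ℕ → ZMod 2 := fun i j => if i = 1 ∧ j = 1 then 1 else 0

lemma uone_mem : uone ∈ RST 1 := by
  refine ⟨⟨fun i j h => ?_, fun i j h2 hij hjn => by omega⟩, ?_⟩
  · simp only [InTri] at h
    rw [uone, if_neg (by omega)]
  · funext i j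
    by_cases hij : InTri 1 i j
    · obtain ⟨h1, h2, h3⟩ := hij
      rw [rot, if_pos ⟨h1, h2, h3⟩]
      have : i = 1 ∧ j = 1 := by omega
      obtain ⟨rfl, rfl⟩ := this
      rfl
    · simp only [InTri] at hij
      rw [rot, if_neg (show ¬ InTri 1 i j from by simp only [InTri]; omega), uone,
        if_neg (by omega)]

lemma uone_ne_zero : uone ≠ 0 := by
  intro h
  have : uone 1 1 = 0 := by rw [h]; rfl
  rw [uone, if_pos ⟨rfl, rfl⟩] at this
  exact one_ne_zero this

lemma RST_one_eq_span : RST 1 = Submodule.span (ZMod 2) {uone} := by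
  apply le_antisymm
  · intro a ha
    obtain ⟨⟨ha0, ha1⟩, har⟩ := ha
    have : a = a 1 1 • uone := by
      funext i j
      simp only [Pi.smul_apply, smul_eq_mul]
      by_cases h : i = 1 ∧ j = 1
      · obtain ⟨rfl, rfl⟩ := h
        rw [uone, if_pos ⟨rfl, rfl⟩, mul_one]
      · rw [uone, if_neg h, mul_zero]
        exact ha0 i j (by simp only [InTri]; omega)
    rw [this]
    exact Submodule.smul_mem _ _ (Submodule.mem_span_singleton_self _)
  · rw [Submodule.span_le, Set.singleton_subset_iff]
    exact uone_mem

/-- Corollary 14. `dim RST(n) = ⌊n/3⌋ + δ_{1,(n mod 3)}`. -/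
theorem statement6 (n : ℕ) :
    Module.finrank (ZMod 2) (RST n) = n / 3 + (if n % 3 = 1 then 1 else 0) := by
  induction n using Nat.strong_induction_on with
  | _ n ih =>
    by_cases hn : n < 3
    · interval_cases n
      · rw [RST_zero_eq_bot]
        simp [finrank_bot]
      · rw [RST_one_eq_span, finrank_span_singleton uone_ne_zero]
        norm_num
      · rw [RST_two_eq_bot]
        simp [finrank_bot]
    · push_neg at hn
      rw [dim_step hn, ih (n - 3) (by omega)]
      have h3 : (n - 3) % 3 = n % 3 := by omega
      rw [h3]
      by_cases h : n % 3 = 1 <;> simp only [h, if_true, if_false] <;> omega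

end Steinhaus
end

section
/- Let n and m be non-negative integers with m = ⌊n/3⌋ + δ_{1,(n mod 3)}. For any integers l_0, …, l_{m-1}, the set {ρ(∇(bs_n(0,l_0))), …, ρ(∇(bs_n(m-1,l_{m-1})))} is a basis of RST(n). Moreover, for each k ∈ {0,…,m-1}, the (i,j)-entry of ρ(∇(bs_n(k,l_k))) equals C(l_k + j - i, k + 1 - i) + C(l_k + n - j, k + i - j) + C(l_k + i - 1, k + j - n) mod 2, for all 1 ≤ i ≤ j ≤ n. -/
open Finset

namespace Steinhaus

lemma ibinom_of_neg {a b : ℤ} (h : b < 0) : ibinom a b = 0 := if_pos h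

lemma ibinom_zero (a : ℤ) : ibinom a 0 = 1 := by
  unfold ibinom; norm_num

lemma ibinom_pascal (a b : ℤ) : ibinom a b = ibinom (a-1) (b-1) + ibinom (a-1) b := by
  rcases lt_trichotomy b 0 with hb | hb | hb
  · rw [ibinom_of_neg hb, ibinom_of_neg (by omega), ibinom_of_neg hb]; ring
  · subst hb
    rw [ibinom_zero, ibinom_zero, ibinom_of_neg (by norm_num)]; ring
  · rcases le_or_gt 1 a with ha | ha
    · unfold ibinom
      rw [if_neg (by omega), if_pos (by omega), if_neg (by omega), if_pos (by omega),
        if_neg (by omega), if_pos (by omega)]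
      have h1 : a.toNat = (a-1).toNat + 1 := by omega
      have h2 : b.toNat = (b-1).toNat + 1 := by omega
      rw [h1, h2, Nat.choose_succ_succ]
      push_cast; ring
    · rcases le_or_gt a 0 with ha0 | ha0
      swap; · omega
      rcases eq_or_lt_of_le ha0 with rfl | ha1
      · unfold ibinom
        rw [if_neg (by omega), if_pos le_rfl, if_neg (by omega), if_neg (by omega),
          if_neg (by omega), if_neg (by omega)]
        have h0 : (0:ℤ).toNat = 0 := rfl
        rw [h0, Nat.choose_eq_zero_of_lt (by omega)]
        have e1 : (b - 1 - (0-1) - 1).toNat = (b-1).toNat := by omega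
        have e2 : (b - (0-1) - 1).toNat = b.toNat := by omega
        rw [e1, e2, Nat.choose_self, Nat.choose_self]
        have : b.toNat = (b-1).toNat + 1 := by omega
        rw [this, pow_succ]
        ring
      · unfold ibinom
        rw [if_neg (by omega), if_neg (by omega), if_neg (by omega), if_neg (by omega),
          if_neg (by omega), if_neg (by omega)]
        have h2 : b.toNat = (b-1).toNat + 1 := by omega
        have e0 : (b - a - 1).toNat = (b - a - 2).toNat + 1 := by omega
        have e1 : (b - 1 - (a-1) - 1).toNat = (b - a - 2).toNat + 1 := by omega
        have e2 : (b - (a-1) - 1).toNat = (b - a - 2).toNat + 1 + 1 := by omega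
        rw [e0, e1, e2, h2]
        rw [show (b-a-2).toNat + 1 + 1 = ((b-a-2).toNat + 1) + 1 from rfl]
        rw [Nat.choose_succ_succ ((b-a-2).toNat + 1) ((b-1).toNat)]
        push_cast [pow_succ]
        ring

/-- Pascal mod 2, in the useful direction. -/
lemma ibinom_pascal2 (a b : ℤ) :
    ((ibinom (a-1) (b-1) : ℤ) : ZMod 2) + ((ibinom (a-1) b : ℤ) : ZMod 2)
      = ((ibinom a b : ℤ) : ZMod 2) := by
  rw [ibinom_pascal a b]; push_cast; ring

/-- A Steinhaus triangle with zero first row is zero. -/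
lemma ST_eq_zero_of_firstRow {n : ℕ} {a : ℕ → ℕ → ZMod 2} (ha : a ∈ ST n)
    (h : ∀ j, 1 ≤ j → j ≤ n → a 1 j = 0) : a = 0 := by
  obtain ⟨h0, h1⟩ := ha
  suffices h2 : ∀ i j, 1 ≤ i → i ≤ j → j ≤ n → a i j = 0 by
    funext i j
    show a i j = 0
    by_cases hij : InTri n i j
    · exact h2 i j hij.1 hij.2.1 hij.2.2
    · exact h0 i j hij
  intro i
  induction i with
  | zero => intro j h; omega
  | succ i ih =>
    intro j h1' h2' h3'
    rcases Nat.eq_zero_or_pos i with rfl | hi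
    · exact h j (by omega) h3'
    · rw [h1 (i+1) j (by omega) h2' h3']
      simp only [Nat.add_sub_cancel]
      rw [ih (j-1) hi (by omega) (by omega), ih j hi (by omega) h3', add_zero]

example : True := trivial
lemma three_pascal {A A' A'' B B' B'' C C' C'' : ZMod 2}
    (P1 : A + A' = A'') (P2 : B'' + B = B') (P3 : C' + C'' = C) :
    A + B + C = (A' + B' + C') + (A'' + B'' + C'') := by
  have two : (2:ZMod 2) = 0 := rfl
  linear_combination P1 + P2 + P3 + (C - A' - B'' - C' - C'')*two

/-- The explicit formula triangle. -/
def Fm (n : ℕ) (l k : ℤ) : ℕ → ℕ → ZMod 2 := fun i j =>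
  if InTri n i j then
    ((ibinom (l + (j:ℤ) - (i:ℤ)) (k + 1 - (i:ℤ)) +
      ibinom (l + (n:ℤ) - (j:ℤ)) (k + (i:ℤ) - (j:ℤ)) +
      ibinom (l + (i:ℤ) - 1) (k + (j:ℤ) - (n:ℤ)) : ℤ) : ZMod 2)
  else 0

lemma Fm_apply {n i j : ℕ} (h : InTri n i j) (l k : ℤ) :
    Fm n l k i j =
    ((ibinom (l + (j:ℤ) - (i:ℤ)) (k + 1 - (i:ℤ)) +
      ibinom (l + (n:ℤ) - (j:ℤ)) (k + (i:ℤ) - (j:ℤ)) +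
      ibinom (l + (i:ℤ) - 1) (k + (j:ℤ) - (n:ℤ)) : ℤ) : ZMod 2) := if_pos h

/-- The ℤ-index version of the Pascal step for `Fm`. -/
lemma Fm_pascal (l k nn i j : ℤ) :
    ((ibinom (l + j - i) (k + 1 - i) + ibinom (l + nn - j) (k + i - j) +
      ibinom (l + i - 1) (k + j - nn) : ℤ) : ZMod 2)
    = ((ibinom (l + (j-1) - (i-1)) (k + 1 - (i-1)) + ibinom (l + nn - (j-1)) (k + (i-1) - (j-1)) +
        ibinom (l + (i-1) - 1) (k + (j-1) - nn) : ℤ) : ZMod 2)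
    + ((ibinom (l + j - (i-1)) (k + 1 - (i-1)) + ibinom (l + nn - j) (k + (i-1) - j) +
        ibinom (l + (i-1) - 1) (k + j - nn) : ℤ) : ZMod 2) := by
  push_cast
  rw [show l + (j-1) - (i-1) = l + j - i from by ring,
      show k + 1 - (i-1) = (k + 1 - i) + 1 from by ring,
      show l + nn - (j-1) = (l + nn - j) + 1 from by ring,
      show k + (i-1) - (j-1) = k + i - j from by ring,
      show l + (i-1) - 1 = (l + i - 1) - 1 from by ring,
      show k + (j-1) - nn = (k + j - nn) - 1 from by ring,
      show l + j - (i-1) = (l + j - i) + 1 from by ring,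
      show k + (i-1) - j = (k + i - j) - 1 from by ring]
  have P1 : ((ibinom (l+j-i) (k+1-i) : ℤ) : ZMod 2) + ((ibinom (l+j-i) (k+1-i+1) : ℤ) : ZMod 2)
      = ((ibinom (l+j-i+1) (k+1-i+1) : ℤ) : ZMod 2) := by
    have h := ibinom_pascal (l+j-i+1) (k+1-i+1)
    simp only [add_sub_cancel_right] at h
    rw [h]; push_cast; ring
  have P2 : ((ibinom (l+nn-j) (k+i-j-1) : ℤ) : ZMod 2) + ((ibinom (l+nn-j) (k+i-j) : ℤ) : ZMod 2)
      = ((ibinom (l+nn-j+1) (k+i-j) : ℤ) : ZMod 2) := by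
    have h := ibinom_pascal (l+nn-j+1) (k+i-j)
    simp only [add_sub_cancel_right] at h
    rw [h]; push_cast; ring
  have P3 := ibinom_pascal2 (l+i-1) (k+j-nn)
  exact three_pascal P1 P2 P3

lemma Fm_mem_ST (n : ℕ) (l k : ℤ) : Fm n l k ∈ ST n := by
  refine ⟨fun i j h => if_neg h, fun i j h2 hij hjn => ?_⟩
  rw [Fm_apply ⟨by omega, hij, hjn⟩, Fm_apply ⟨by omega, by omega, by omega⟩,
    Fm_apply ⟨by omega, by omega, by omega⟩]
  have e1 : ((i-1 : ℕ) : ℤ) = (i:ℤ) - 1 := by omega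
  have e2 : ((j-1 : ℕ) : ℤ) = (j:ℤ) - 1 := by omega
  rw [e1, e2]
  exact Fm_pascal l k n i j

lemma rot_Fm (n : ℕ) (l k : ℤ) : rot n (Fm n l k) = Fm n l k := by
  funext i j
  unfold rot
  by_cases h : InTri n i j
  swap
  · rw [if_neg h, Fm]; simp only [if_neg h]
  obtain ⟨h1, h2, h3⟩ := h
  rw [if_pos ⟨h1, h2, h3⟩, Fm_apply ⟨by omega, by omega, by omega⟩, Fm_apply ⟨h1, h2, h3⟩]
  have e1 : ((j - i + 1 : ℕ) : ℤ) = (j:ℤ) - (i:ℤ) + 1 := by omega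
  have e2 : ((n - i + 1 : ℕ) : ℤ) = (n:ℤ) - (i:ℤ) + 1 := by omega
  rw [e1, e2]
  rw [show l + ((n:ℤ) - i + 1) - ((j:ℤ) - i + 1) = l + n - j from by ring,
      show k + 1 - ((j:ℤ) - (i:ℤ) + 1) = k + i - j from by ring,
      show l + (n:ℤ) - ((n:ℤ) - (i:ℤ) + 1) = l + i - 1 from by ring,
      show k + ((j:ℤ) - (i:ℤ) + 1) - ((n:ℤ) - (i:ℤ) + 1) = k + j - n from by ring,
      show l + ((j:ℤ) - (i:ℤ) + 1) - 1 = l + j - i from by ring,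
      show k + ((n:ℤ) - (i:ℤ) + 1) - (n:ℤ) = k + 1 - i from by ring]
  push_cast
  ring

lemma Fm_mem_RST (n : ℕ) (l k : ℤ) : Fm n l k ∈ RST n :=
  ⟨Fm_mem_ST n l k, rot_Fm n l k⟩

lemma add_add_self (u v : ZMod 2) : u + (v + u) = v := by
  have two : (2:ZMod 2) = 0 := rfl
  linear_combination u * two

lemma T_entry {n : ℕ} {a : ℕ → ℕ → ZMod 2} {l k : ℤ} (ha : a ∈ ST n)
    (hfr : FirstRow n a (bseq k l)) :
    ∀ i j, 1 ≤ i → i ≤ j → j ≤ n →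
      a i j = ((ibinom (l + (j:ℤ) - (i:ℤ)) (k + 1 - (i:ℤ)) : ℤ) : ZMod 2) := by
  intro i
  induction i with
  | zero => intro j h; omega
  | succ i ih =>
    intro j h1 h2 h3
    rcases Nat.eq_zero_or_pos i with rfl | hi
    · rw [hfr j (by omega) h3]
      simp only [bseq, Nat.cast_one]
      norm_num
    · rw [ha.2 (i+1) j (by omega) h2 h3]
      simp only [Nat.add_sub_cancel]
      rw [ih (j-1) hi (by omega) (by omega), ih j hi (by omega) h3]
      have ej : ((j-1:ℕ):ℤ) = (j:ℤ)-1 := by omega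
      rw [ej]
      push_cast
      rw [show l + ((j:ℤ)-1) - (i:ℤ) = l + j - i - 1 from by ring,
          show l + (j:ℤ) - ((i:ℤ)+1) = l + j - i - 1 from by ring,
          show k + 1 - ((i:ℤ)+1) = k + 1 - i - 1 from by ring]
      rw [ibinom_pascal (l + (j:ℤ) - (i:ℤ)) (k + 1 - (i:ℤ))]
      push_cast
      exact add_add_self _ _

lemma rhoT_eq_Fm {n : ℕ} {a : ℕ → ℕ → ZMod 2} {l k : ℤ} (ha : a ∈ ST n)
    (hfr : FirstRow n a (bseq k l)) : rho n a = Fm n l k := by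
  funext i j
  show rot n (rot n a) i j + rot n a i j + a i j = _
  by_cases h : InTri n i j
  swap
  · rw [Fm, if_neg h, rot, if_neg h, rot, if_neg h, ha.1 i j h]
    simp
  obtain ⟨h1, h2, h3⟩ := h
  rw [Fm_apply ⟨h1, h2, h3⟩]
  have hr1 : rot n a i j = a (j-i+1) (n-i+1) := if_pos ⟨h1, h2, h3⟩
  have hr2 : rot n (rot n a) i j = rot n a (j-i+1) (n-i+1) := if_pos ⟨h1, h2, h3⟩
  have hr3 : rot n a (j-i+1) (n-i+1) = a (n-j+1) (n-j+i) := by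
    rw [show a (n-j+1) (n-j+i) = a ((n-i+1)-(j-i+1)+1) (n-(j-i+1)+1) from by
      rw [show (n-i+1) - (j-i+1) + 1 = n-j+1 from by omega,
          show n - (j-i+1) + 1 = n-j+i from by omega]]
    exact if_pos ⟨by omega, by omega, by omega⟩
  rw [hr2, hr3, hr1]
  rw [T_entry ha hfr (n-j+1) (n-j+i) (by omega) (by omega) (by omega),
      T_entry ha hfr (j-i+1) (n-i+1) (by omega) (by omega) (by omega),
      T_entry ha hfr i j h1 h2 h3]
  have e1 : ((n-j+1:ℕ):ℤ) = (n:ℤ)-(j:ℤ)+1 := by omega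
  have e2 : ((n-j+i:ℕ):ℤ) = (n:ℤ)-(j:ℤ)+(i:ℤ) := by omega
  have e3 : ((j-i+1:ℕ):ℤ) = (j:ℤ)-(i:ℤ)+1 := by omega
  have e4 : ((n-i+1:ℕ):ℤ) = (n:ℤ)-(i:ℤ)+1 := by omega
  rw [e1, e2, e3, e4]
  rw [show l + ((n:ℤ)-(j:ℤ)+(i:ℤ)) - ((n:ℤ)-(j:ℤ)+1) = l + i - 1 from by ring,
      show k + 1 - ((n:ℤ)-(j:ℤ)+1) = k + j - n from by ring,
      show l + ((n:ℤ)-(i:ℤ)+1) - ((j:ℤ)-(i:ℤ)+1) = l + n - j from by ring,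
      show k + 1 - ((j:ℤ)-(i:ℤ)+1) = k + i - j from by ring]
  push_cast
  ring

lemma zmod2_self (x : ZMod 2) : x + x = 0 := by revert x; decide

lemma zmod2_add_cancel {x y : ZMod 2} (h : x + y = 0) : x = y := by revert x y; decide

lemma zmod2_add_add (x y : ZMod 2) : x + y + y = x := by revert x y; decide

/-- Value of `Fm n l 0` : 1 on each side of the triangle, 0 at corners. -/
lemma Fm_k_zero {n i j : ℕ} (h : InTri n i j) (l : ℤ) :
    Fm n l 0 i j = ((if i = 1 then 1 else 0) + (if i = j then 1 else 0) +
      (if j = n then 1 else 0) : ZMod 2) := by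
  obtain ⟨h1, h2, h3⟩ := h
  rw [Fm_apply ⟨h1, h2, h3⟩]
  have e1 : ibinom (l + (j:ℤ) - (i:ℤ)) (0 + 1 - (i:ℤ)) = if i = 1 then 1 else 0 := by
    by_cases hi : i = 1
    · subst hi; rw [if_pos rfl, show (0:ℤ) + 1 - ((1:ℕ):ℤ) = 0 from by norm_num, ibinom_zero]
    · rw [if_neg hi, ibinom_of_neg (by omega)]
  have e2 : ibinom (l + (n:ℤ) - (j:ℤ)) (0 + (i:ℤ) - (j:ℤ)) = if i = j then 1 else 0 := by
    by_cases hij : i = j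
    · subst hij; rw [if_pos rfl, show (0:ℤ) + (i:ℤ) - (i:ℤ) = 0 from by ring, ibinom_zero]
    · rw [if_neg hij, ibinom_of_neg (by omega)]
  have e3 : ibinom (l + (i:ℤ) - 1) (0 + (j:ℤ) - (n:ℤ)) = if j = n then 1 else 0 := by
    by_cases hjn : j = n
    · subst hjn; rw [if_pos rfl, show (0:ℤ) + (j:ℤ) - (j:ℤ) = 0 from by ring, ibinom_zero]
    · rw [if_neg hjn, ibinom_of_neg (by omega)]
  rw [e1, e2, e3]
  push_cast
  split_ifs <;> norm_num

/-- `Fm` with `k = -1` vanishes. -/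
lemma Fm_neg_one (n : ℕ) (l : ℤ) : Fm n l (-1) = 0 := by
  funext i j
  show Fm n l (-1) i j = 0
  by_cases h : InTri n i j
  · obtain ⟨h1, h2, h3⟩ := h
    rw [Fm_apply ⟨h1, h2, h3⟩, ibinom_of_neg (by omega), ibinom_of_neg (by omega),
      ibinom_of_neg (by omega)]
    norm_num
  · exact if_neg h

lemma Hmap_Fm (n : ℕ) (hn : 3 ≤ n) (l k : ℤ) :
    Hmap n (Fm n l k) = Fm (n-3) (l+1) (k-1) := by
  funext i j
  show (if InTri (n-3) i j then Fm n l k (1+i) (2+j) else 0) = _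
  by_cases h : InTri (n-3) i j
  swap
  · rw [if_neg h, Fm, if_neg h]
  obtain ⟨h1, h2, h3⟩ := h
  rw [if_pos ⟨h1, h2, h3⟩, Fm_apply (show InTri n (1+i) (2+j) from ⟨by omega, by omega, by omega⟩),
    Fm_apply ⟨h1, h2, h3⟩]
  have e1 : ((1+i:ℕ):ℤ) = 1 + (i:ℤ) := by omega
  have e2 : ((2+j:ℕ):ℤ) = 2 + (j:ℤ) := by omega
  have e3 : ((n-3:ℕ):ℤ) = (n:ℤ) - 3 := by omega
  rw [e1, e2, e3]
  rw [show l + (2 + (j:ℤ)) - (1 + (i:ℤ)) = (l+1) + j - i from by ring,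
      show k + 1 - (1 + (i:ℤ)) = (k-1) + 1 - i from by ring,
      show l + (n:ℤ) - (2 + (j:ℤ)) = (l+1) + ((n:ℤ)-3) - j from by ring,
      show k + (1 + (i:ℤ)) - (2 + (j:ℤ)) = (k-1) + i - j from by ring,
      show l + (1 + (i:ℤ)) - 1 = (l+1) + i - 1 from by ring,
      show k + (2 + (j:ℤ)) - (n:ℤ) = (k-1) + j - ((n:ℤ)-3) from by ring]

lemma Hmap_mem_RST {n : ℕ} (hn : 3 ≤ n) {a : ℕ → ℕ → ZMod 2} (ha : a ∈ RST n) :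
    Hmap n a ∈ RST (n-3) := by
  obtain ⟨⟨h0, h1⟩, hrot⟩ := ha
  have arot : ∀ i j, InTri n i j → a i j = a (j-i+1) (n-i+1) := fun i j h =>
    ((congrFun (congrFun hrot i) j).symm).trans (if_pos h)
  refine ⟨⟨fun i j h => if_neg h, fun i j h2 hij hjn => ?_⟩, ?_⟩
  · show (if InTri (n-3) i j then a (1+i) (2+j) else 0) = _
    rw [if_pos ⟨by omega, hij, hjn⟩]
    show _ = (if InTri (n-3) (i-1) (j-1) then a (1+(i-1)) (2+(j-1)) else 0) +
      (if InTri (n-3) (i-1) j then a (1+(i-1)) (2+j) else 0)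
    rw [if_pos ⟨by omega, by omega, by omega⟩, if_pos ⟨by omega, by omega, by omega⟩]
    have hr := h1 (1+i) (2+j) (by omega) (by omega) (by omega)
    rw [show 1+i-1 = 1+(i-1) from by omega, show 2+j-1 = 2+(j-1) from by omega] at hr
    rw [show 2+(j-1) = (2+j)-1 from by omega] at hr ⊢
    convert hr using 3
  · funext i j
    show (if InTri (n-3) i j then Hmap n a (j-i+1) (n-3-i+1) else 0) = Hmap n a i j
    by_cases h : InTri (n-3) i j
    swap
    · rw [if_neg h]; exact (if_neg h).symm
    obtain ⟨h1', h2', h3'⟩ := h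
    rw [if_pos ⟨h1', h2', h3'⟩]
    show (if InTri (n-3) (j-i+1) (n-3-i+1) then a (1+(j-i+1)) (2+(n-3-i+1)) else 0) = _
    rw [if_pos ⟨by omega, by omega, by omega⟩]
    show _ = (if InTri (n-3) i j then a (1+i) (2+j) else 0)
    rw [if_pos ⟨h1', h2', h3'⟩]
    rw [arot (1+i) (2+j) ⟨by omega, by omega, by omega⟩]
    congr 1 <;> omega

/-- Kernel of `Hmap` on `RST n` with the `(1,2)` entry zero. -/
lemma ker_Hmap {n : ℕ} (hn : 3 ≤ n) {a : ℕ → ℕ → ZMod 2} (ha : a ∈ RST n)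
    (hH : Hmap n a = 0) (h12 : a 1 2 = 0) : a = 0 := by
  obtain ⟨⟨h0, h1⟩, hrot⟩ := ha
  have arot : ∀ i j, InTri n i j → a i j = a (j-i+1) (n-i+1) := fun i j h =>
    ((congrFun (congrFun hrot i) j).symm).trans (if_pos h)
  have hHa : ∀ i j, InTri (n-3) i j → a (1+i) (2+j) = 0 := by
    intro i j h
    have := congrFun (congrFun hH i) j
    rw [Hmap, if_pos h] at this
    exact this
  -- chain on the first row
  have chain : ∀ j, 2 ≤ j → j ≤ n-1 → a 1 j = 0 := by
    intro j
    induction j with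
    | zero => omega
    | succ j ihj =>
      intro hj2 hjn
      rcases Nat.lt_or_ge j 2 with hj | hj
      · have : j = 1 := by omega
        subst this
        exact h12
      · have hz : a 2 (j+1) = 0 := by
          have := hHa 1 (j-1) ⟨le_rfl, by omega, by omega⟩
          rwa [show 2+(j-1) = j+1 from by omega] at this
        have hr := h1 2 (j+1) le_rfl (by omega) (by omega)
        rw [show (2:ℕ)-1 = 1 from rfl, show j+1-1 = j from rfl] at hr
        rw [ihj hj (by omega)] at hr
        rw [zero_add] at hr
        rw [← hr, hz]
  -- first row is zero
  have row1 : ∀ j, 1 ≤ j → j ≤ n → a 1 j = 0 := by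
    intro j hj1 hjn
    rcases Nat.lt_or_ge j 2 with hj | hj
    · -- j = 1
      have hj' : j = 1 := by omega
      subst hj'
      -- a 2 2 = a 1 1 + a 1 2 and a 2 2 = a 1 (n-1)
      have hr := h1 2 2 le_rfl le_rfl (by omega)
      rw [show (2:ℕ)-1 = 1 from rfl] at hr
      have he : a 2 2 = a 1 (n-1) := by
        have := arot 2 2 ⟨by omega, le_rfl, by omega⟩
        rwa [show 2-2+1 = 1 from rfl, show n-2+1 = n-1 from by omega] at this
      have hm1 : a 1 (n-1) = 0 := by
        rcases Nat.lt_or_ge n 4 with hn4 | hn4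
        · have e : n - 1 = 2 := by omega
          rw [e]; exact h12
        · exact chain (n-1) (by omega) (by omega)
      rw [he, hm1, h12, add_zero] at hr
      exact hr.symm
    · rcases Nat.lt_or_ge j n with hjn' | hjn'
      · exact chain j hj (by omega)
      · -- j = n
        have hj' : j = n := by omega
        rw [hj']
        have hr := h1 2 n le_rfl (by omega) le_rfl
        rw [show (2:ℕ)-1 = 1 from rfl] at hr
        have he : a 2 n = a 1 2 := by
          have e1 := arot 2 n ⟨by omega, by omega, le_rfl⟩
          rw [show n-2+1 = n-1 from by omega] at e1
          have e2 := arot (n-1) (n-1) ⟨by omega, le_rfl, by omega⟩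
          rw [show n-1-(n-1)+1 = 1 from by omega, show n-(n-1)+1 = 2 from by omega] at e2
          rw [e1, e2]
        have hchain : a 1 (n-1) = 0 := by
          rcases Nat.lt_or_ge n 4 with hn4 | hn4
          · have e : n - 1 = 2 := by omega
            rw [e]; exact h12
          · exact chain (n-1) (by omega) (by omega)
        rw [he, h12, hchain, zero_add] at hr
        exact hr.symm
  exact ST_eq_zero_of_firstRow ⟨h0, h1⟩ row1

lemma span_Fm : ∀ n m : ℕ, m = n / 3 + (if n % 3 = 1 then 1 else 0) →
    ∀ l : Fin m → ℤ, ∀ a, a ∈ RST n → ∃ c : Fin m → ZMod 2,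
      a = ∑ k : Fin m, c k • Fm n (l k) ((k:ℕ):ℤ) := by
  intro n
  induction n using Nat.strong_induction_on with
  | _ n IH =>
  intro m hm l a ha
  rcases Nat.lt_or_ge n 3 with hn | hn
  · interval_cases n
    · -- n = 0
      have hm0 : m = 0 := by norm_num at hm; omega
      subst hm0
      refine ⟨0, ?_⟩
      rw [Finset.univ_eq_empty, Finset.sum_empty]
      funext i j
      show a i j = 0
      exact ha.1.1 i j (by rintro ⟨u1, u2, u3⟩; omega)
    · -- n = 1
      have hm1 : m = 1 := by norm_num at hm; omega
      subst hm1
      refine ⟨fun _ => a 1 1, ?_⟩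
      rw [Fin.sum_univ_one]
      have h11 : ∀ b c : ℕ → ℕ → ZMod 2, b ∈ ST 1 → c ∈ ST 1 → b 1 1 = c 1 1 → b = c := by
        intro b c hb hc h
        have : b + c = 0 := ST_eq_zero_of_firstRow (add_mem hb hc) (by
          intro j hj1 hj2
          have : j = 1 := by omega
          subst this
          show b 1 1 + c 1 1 = 0
          rw [h]
          exact zmod2_self _)
        funext i j
        exact zmod2_add_cancel (congrFun (congrFun this i) j)
      refine h11 a _ ha.1 ((RST 1).smul_mem _ (Fm_mem_RST 1 _ _)).1 ?_
      show a 1 1 = a 1 1 * Fm 1 (l 0) 0 1 1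
      rw [Fm_k_zero ⟨le_rfl, le_rfl, le_rfl⟩]
      norm_num
      rw [show (3:ZMod 2) = 1 from by decide, mul_one]
    · -- n = 2
      have hm2 : m = 0 := by norm_num at hm; omega
      subst hm2
      refine ⟨0, ?_⟩
      rw [Finset.univ_eq_empty, Finset.sum_empty]
      obtain ⟨⟨h0, h1⟩, hrot⟩ := ha
      have arot : ∀ i j, InTri 2 i j → a i j = a (j-i+1) (2-i+1) := fun i j h =>
        ((congrFun (congrFun hrot i) j).symm).trans (if_pos h)
      have e1 : a 1 1 = a 1 2 := arot 1 1 ⟨le_rfl, le_rfl, by omega⟩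
      have e2 : a 2 2 = a 1 1 := by
        have := arot 2 2 ⟨by omega, le_rfl, le_rfl⟩
        simpa using this
      have hr := h1 2 2 le_rfl le_rfl le_rfl
      rw [show (2:ℕ)-1 = 1 from rfl] at hr
      rw [e2, ← e1] at hr
      have h11 : a 1 1 = 0 := by
        have h2 := zmod2_add_add (0 : ZMod 2) (a 1 1)
        rw [zero_add] at h2
        rw [← h2, ← hr]
      apply ST_eq_zero_of_firstRow ⟨h0, h1⟩
      intro j hj1 hj2
      interval_cases j
      · exact h11
      · rw [← e1]; exact h11
  · -- n ≥ 3
    obtain ⟨m', rfl⟩ : ∃ m', m = m' + 1 := ⟨m - 1, by split_ifs at hm <;> omega⟩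
    have hm' : m' = (n-3) / 3 + (if (n-3) % 3 = 1 then 1 else 0) := by
      split_ifs at hm ⊢ <;> omega
    set l' : Fin m' → ℤ := fun k => l k.succ + 1 with hl'
    have hb : Hmap n a ∈ RST (n-3) := Hmap_mem_RST hn ha
    obtain ⟨c', hc'⟩ := IH (n-3) (by omega) m' hm' l' (Hmap n a) hb
    set s : ℕ → ℕ → ZMod 2 := ∑ k : Fin m', c' k • Fm n (l k.succ) (((k:ℕ):ℤ)+1) with hs
    set a' := a + s with ha'def
    have hsRST : s ∈ RST n := sum_mem fun k _ => Submodule.smul_mem _ _ (Fm_mem_RST n _ _)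
    have ha' : a' ∈ RST n := add_mem ha hsRST
    have hHs : Hmap n s = Hmap n a := by
      have : Hmap n s = ∑ k : Fin m', c' k • Hmap n (Fm n (l k.succ) (((k:ℕ):ℤ)+1)) := by
        rw [hs]
        induction (Finset.univ : Finset (Fin m')) using Finset.induction with
        | empty =>
          simp only [Finset.sum_empty]
          funext i j
          simp [Hmap]
        | insert _ _ hx ih =>
          rw [Finset.sum_insert hx, Finset.sum_insert hx, Hmap_add, Hmap_smul, ih]
      rw [this]
      have he : ∀ k : Fin m', Hmap n (Fm n (l k.succ) (((k:ℕ):ℤ)+1)) = Fm (n-3) (l' k) ((k:ℕ):ℤ) := by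
        intro k
        rw [Hmap_Fm n hn, add_sub_cancel_right, hl']
      rw [Finset.sum_congr rfl fun k _ => by rw [he k]]
      exact hc'.symm
    have hHa' : Hmap n a' = 0 := by
      rw [ha'def, Hmap_add, hHs]
      funext i j
      simpa using zmod2_self (Hmap n a i j)
    -- a' + (a' 1 2) • Fm n (l 0) 0 is killed by ker_Hmap
    set c0 := a' 1 2 with hc0
    have hker : a' + c0 • Fm n (l 0) 0 = 0 := by
      apply ker_Hmap hn (add_mem ha' (Submodule.smul_mem _ _ (Fm_mem_RST n _ _)))
      · rw [Hmap_add, Hmap_smul, hHa', Hmap_Fm n hn]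
        rw [show (0:ℤ)-1 = -1 from by norm_num, Fm_neg_one]
        funext i j
        simp
      · show a' 1 2 + (c0 • Fm n (l 0) 0) 1 2 = 0
        have : Fm n (l 0) 0 1 2 = 1 := by
          rw [Fm_k_zero ⟨le_rfl, by omega, by omega⟩]
          rw [if_pos rfl, if_neg (by omega), if_neg (by omega)]
          norm_num
        show a' 1 2 + c0 * Fm n (l 0) 0 1 2 = 0
        rw [this, mul_one, hc0]
        exact zmod2_self _
    have haeq : a' = c0 • Fm n (l 0) 0 := by
      funext i j
      exact zmod2_add_cancel (congrFun (congrFun hker i) j)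
    refine ⟨Fin.cons c0 c', ?_⟩
    rw [Fin.sum_univ_succ]
    simp only [Fin.cons_zero, Fin.cons_succ]
    have hsum : ∑ k : Fin m', c' k • Fm n (l k.succ) (((k.succ:Fin (m'+1)):ℕ):ℤ) = s := by
      rw [hs]
      refine Finset.sum_congr rfl fun k _ => ?_
      congr 1
    rw [hsum]
    have : a = a' + s := by
      funext i j
      show a i j = (a i j + s i j) + s i j
      rw [zmod2_add_add]
    rw [this, haeq]
    have e0 : (((0 : Fin (m'+1)) : ℕ) : ℤ) = 0 := by norm_num
    rw [e0]

lemma pivot_evalA {n k k' : ℕ} (l' : ℤ) (h : k' ≤ k) (hA : 3*k+3 ≤ n) :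
    Fm n l' ((k':ℕ):ℤ) (k+1) (2*k+2) = if k' = k then 1 else 0 := by
  rw [Fm_apply ⟨by omega, by omega, by omega⟩]
  rw [ibinom_of_neg (show ((k':ℕ):ℤ) + ((k+1:ℕ):ℤ) - ((2*k+2:ℕ):ℤ) < 0 from by push_cast; omega),
      ibinom_of_neg (show ((k':ℕ):ℤ) + ((2*k+2:ℕ):ℤ) - (n:ℤ) < 0 from by push_cast; omega)]
  by_cases hk : k' = k
  · subst hk
    rw [if_pos rfl,
      show ((k':ℕ):ℤ) + 1 - ((k'+1:ℕ):ℤ) = 0 from by push_cast; ring, ibinom_zero]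
    norm_num
  · rw [if_neg hk, ibinom_of_neg (show ((k':ℕ):ℤ) + 1 - ((k+1:ℕ):ℤ) < 0 from by push_cast; omega)]
    norm_num

lemma pivot_evalB {n k k' : ℕ} (l' : ℤ) (h : k' ≤ k) (hB : n = 3*k+1) :
    Fm n l' ((k':ℕ):ℤ) (k+1) (2*k+1) = if k' = k then 1 else 0 := by
  rw [Fm_apply ⟨by omega, by omega, by omega⟩]
  by_cases hk : k' = k
  · subst hk
    rw [if_pos rfl,
      show ((k':ℕ):ℤ) + 1 - ((k'+1:ℕ):ℤ) = 0 from by push_cast; ring,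
      show ((k':ℕ):ℤ) + ((k'+1:ℕ):ℤ) - ((2*k'+1:ℕ):ℤ) = 0 from by push_cast; ring,
      show ((k':ℕ):ℤ) + ((2*k'+1:ℕ):ℤ) - (n:ℤ) = 0 from by push_cast; omega,
      ibinom_zero, ibinom_zero, ibinom_zero]
    norm_num
    decide
  · rw [if_neg hk,
      ibinom_of_neg (show ((k':ℕ):ℤ) + 1 - ((k+1:ℕ):ℤ) < 0 from by push_cast; omega),
      ibinom_of_neg (show ((k':ℕ):ℤ) + ((k+1:ℕ):ℤ) - ((2*k+1:ℕ):ℤ) < 0 from by push_cast; omega),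
      ibinom_of_neg (show ((k':ℕ):ℤ) + ((2*k+1:ℕ):ℤ) - (n:ℤ) < 0 from by push_cast; omega)]
    norm_num

lemma indep_Fm (n m : ℕ) (hm : m = n / 3 + (if n % 3 = 1 then 1 else 0)) (l : Fin m → ℤ) :
    LinearIndependent (ZMod 2) (fun k : Fin m => Fm n (l k) ((k:ℕ):ℤ)) := by
  rw [Fintype.linearIndependent_iff]
  intro g hg
  by_contra hne
  push_neg at hne
  obtain ⟨k1, hk1⟩ := hne
  set t : Finset (Fin m) := Finset.univ.filter (fun k => g k ≠ 0) with ht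
  have hts : t.Nonempty := ⟨k1, by simp [ht, hk1]⟩
  set k0 := t.max' hts with hk0
  have hk0t : k0 ∈ t := t.max'_mem hts
  have hk0ne : g k0 ≠ 0 := by
    have := hk0t
    rw [ht, Finset.mem_filter] at this
    exact this.2
  have hmax : ∀ k : Fin m, g k ≠ 0 → k ≤ k0 := fun k hk =>
    Finset.le_max' t k (by simp [ht, hk])
  -- choose pivot
  have hcase : 3*(k0:ℕ)+3 ≤ n ∨ n = 3*(k0:ℕ)+1 := by
    have h1 := k0.2
    have h2 := hm
    split_ifs at h2 <;> omega
  obtain ⟨pi, pj, hpiv⟩ : ∃ pi pj, ∀ k' : Fin m, (k':ℕ) ≤ (k0:ℕ) →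
      Fm n (l k') ((k':ℕ):ℤ) pi pj = if (k':ℕ) = (k0:ℕ) then 1 else 0 := by
    rcases hcase with hA | hB
    · exact ⟨(k0:ℕ)+1, 2*(k0:ℕ)+2, fun k' h => pivot_evalA (l k') h hA⟩
    · exact ⟨(k0:ℕ)+1, 2*(k0:ℕ)+1, fun k' h => pivot_evalB (l k') h hB⟩
  have hev := congrFun (congrFun hg pi) pj
  rw [Finset.sum_apply, Finset.sum_apply] at hev
  have hterm : ∀ k : Fin m, (g k • Fm n (l k) ((k:ℕ):ℤ)) pi pj
      = if k = k0 then g k0 else 0 := by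
    intro k
    show g k * Fm n (l k) ((k:ℕ):ℤ) pi pj = _
    rcases lt_trichotomy k k0 with hlt | heq | hgt
    · rw [hpiv k (le_of_lt hlt), if_neg (by omega), if_neg (by omega)]
      ring
    · have e : (k:ℕ) = (k0:ℕ) := by rw [heq]
      rw [hpiv k (le_of_eq e), if_pos e, if_pos heq, mul_one, heq]
    · rw [if_neg (by omega)]
      have : g k = 0 := by
        by_contra h
        exact absurd (hmax k h) (not_le.mpr hgt)
      rw [this, zero_mul]
  rw [Finset.sum_congr rfl (fun k _ => hterm k), Finset.sum_ite_eq' Finset.univ k0] at hev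
  rw [if_pos (Finset.mem_univ k0)] at hev
  exact hk0ne hev


/-- Theorem 4. With `m = ⌊n/3⌋ + δ_{1,(n mod 3)}` and arbitrary
integers `l_0,…,l_{m-1}`, the family `(ρ(∇(bs_n(k, l_k))))_{0≤k≤m-1}` is a basis
of `RST(n)`; moreover its `(i,j)`-entry is
`C(l_k+j-i, k+1-i) + C(l_k+n-j, k+i-j) + C(l_k+i-1, k+j-n) mod 2`.
Each `T k` denotes the triangle `∇(bs_n(k, l_k))`, i.e. the member of `ST(n)`
with first row `bs_n(k, l_k)`. -/
theorem statement7 (n m : ℕ) (hm : m = n / 3 + if n % 3 = 1 then 1 else 0)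
    (l : Fin m → ℤ) (T : Fin m → ℕ → ℕ → ZMod 2)
    (hT : ∀ k, T k ∈ ST n ∧ FirstRow n (T k) (bseq ((k : ℕ) : ℤ) (l k))) :
    (∃ b : Module.Basis (Fin m) (ZMod 2) (RST n),
      ∀ k, (b k : ℕ → ℕ → ZMod 2) = rho n (T k)) ∧
    ∀ k : Fin m, ∀ i j, 1 ≤ i → i ≤ j → j ≤ n →
      rho n (T k) i j =
        ((ibinom (l k + (j : ℤ) - (i : ℤ)) (((k : ℕ) : ℤ) + 1 - (i : ℤ)) +
          ibinom (l k + (n : ℤ) - (j : ℤ)) (((k : ℕ) : ℤ) + (i : ℤ) - (j : ℤ)) +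
          ibinom (l k + (i : ℤ) - 1) (((k : ℕ) : ℤ) + (j : ℤ) - (n : ℤ)) : ℤ) : ZMod 2) := by
  have hFm : ∀ k : Fin m, rho n (T k) = Fm n (l k) ((k:ℕ):ℤ) :=
    fun k => rhoT_eq_Fm (hT k).1 (hT k).2
  constructor
  · set v : Fin m → RST n := fun k => ⟨Fm n (l k) ((k:ℕ):ℤ), Fm_mem_RST n _ _⟩ with hv
    have hli : LinearIndependent (ZMod 2) v := by
      apply LinearIndependent.of_comp (RST n).subtype
      have he : ((RST n).subtype ∘ v) = fun k => Fm n (l k) ((k:ℕ):ℤ) := rfl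
      rw [he]
      exact indep_Fm n m hm l
    have hsp : ⊤ ≤ Submodule.span (ZMod 2) (Set.range v) := by
      rintro ⟨x, hx⟩ -
      obtain ⟨c, hc⟩ := span_Fm n m hm l x hx
      have hxe : (⟨x, hx⟩ : RST n) = ∑ k : Fin m, c k • v k := by
        apply Subtype.ext
        show x = ((∑ k : Fin m, c k • v k : RST n) : ℕ → ℕ → ZMod 2)
        rw [hc]
        simp [v]
      rw [hxe]
      exact Submodule.sum_mem _ fun k _ => Submodule.smul_mem _ _
        (Submodule.subset_span ⟨k, rfl⟩)
    refine ⟨Module.Basis.mk hli hsp, fun k => ?_⟩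
    rw [Module.Basis.mk_apply]
    show ((v k : RST n) : ℕ → ℕ → ZMod 2) = rho n (T k)
    rw [hFm k]
  · intro k i j h1 h2 h3
    rw [hFm k, Fm_apply ⟨h1, h2, h3⟩]

end Steinhaus
end
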